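/- Let X be a finite connected quandle. Then the type t_X of X (the minimal positive N with x◁^N y = x for all x,y) divides |Inn(X)| / |X|. -/

import Mathlib

/-- A quandle in the convention of the paper. -/
class PQuandle (X : Type*) where
  op : X → X → X
  op_self : ∀ a : X, op a a = a
  op_bij : ∀ a : X, Function.Bijective (fun x => op x a)
  op_distrib : ∀ a b c : X, op (op a b) c = op (op a c) (op b c)

infixl:65 " ◁ " => PQuandle.op

namespace PQuandle

variable {X : Type*} [PQuandle X]

/-- The `n`-fold right operation `x ◁ⁿ y`. -/
def opn (x : X) (n : ℕ) (y : X) : X := (fun z => z ◁ y)^[n] x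

/-- The right translation `(· ◁ y)` as a permutation of `X`. -/
noncomputable def act (y : X) : Equiv.Perm X := Equiv.ofBijective _ (op_bij y)

@[simp] lemma act_apply (y x : X) : act y x = x ◁ y := rfl

/-- The inner automorphism group `Inn(X)`. -/
noncomputable def Inn (X : Type*) [PQuandle X] : Subgroup (Equiv.Perm X) :=
  Subgroup.closure (Set.range (act (X := X)))

/-- The relators `e_{x ◁ y}⁻¹ e_y⁻¹ e_x e_y` of the adjoint group. -/
def adjRels (X : Type*) [PQuandle X] : Set (FreeGroup X) :=
  { r | ∃ x y : X,
      r = (FreeGroup.of (x ◁ y))⁻¹ * (FreeGroup.of y)⁻¹ * FreeGroup.of x * FreeGroup.of y }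

/-- The adjoint (enveloping) group `As(X)` of the quandle `X`. -/
def Adj (X : Type*) [PQuandle X] : Type _ := PresentedGroup (adjRels X)

instance : Group (Adj X) := by unfold Adj; infer_instance

/-- The generator `e_x` of `As(X)`. -/
def gen (x : X) : Adj X := PresentedGroup.of x

lemma gen_rel (x y : X) : gen (x ◁ y) = (gen y)⁻¹ * gen x * gen y := by
  have h : ((FreeGroup.of (x ◁ y))⁻¹ * (FreeGroup.of y)⁻¹ * FreeGroup.of x * FreeGroup.of y :
      FreeGroup X) ∈ Subgroup.normalClosure (adjRels X) :=
    Subgroup.subset_normalClosure ⟨x, y, rfl⟩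
  have h2 : ((gen (x ◁ y))⁻¹ * (gen y)⁻¹ * gen x * gen y : Adj X) = 1 := by
    have := (QuotientGroup.eq_one_iff
      (((FreeGroup.of (x ◁ y))⁻¹ * (FreeGroup.of y)⁻¹ * FreeGroup.of x * FreeGroup.of y :
        FreeGroup X))).mpr h
    exact this
  calc gen (x ◁ y)
      = gen (x ◁ y) * ((gen (x ◁ y))⁻¹ * (gen y)⁻¹ * gen x * gen y) := by rw [h2, mul_one]
    _ = (gen y)⁻¹ * gen x * gen y := by group

lemma act_mul_act (x y : X) : act y * act x = act (x ◁ y) * act y := by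
  ext z
  simp only [Equiv.Perm.mul_apply, act_apply]
  exact op_distrib z x y

/-- The homomorphism `As(X) → Perm(X)` sending `e_y` to the inverse of the right
translation by `y`; it encodes the right action of `As(X)` on `X`. -/
noncomputable def innHom : Adj X →* Equiv.Perm X :=
  PresentedGroup.toGroup (f := fun y : X => (act y)⁻¹) (by
    rintro r ⟨x, y, rfl⟩
    simp only [map_mul, map_inv, FreeGroup.lift_apply_of, inv_inv]
    have := act_mul_act x y
    calc act (x ◁ y) * act y * (act x)⁻¹ * (act y)⁻¹
        = (act y * act x) * (act x)⁻¹ * (act y)⁻¹ := by rw [this]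
      _ = 1 := by group)

@[simp] lemma innHom_gen (y : X) : innHom (gen y) = (act y)⁻¹ :=
  PresentedGroup.toGroup.of _

/-- The right action of `As(X)` on `X`: `x · g`. -/
noncomputable def ract (x : X) (g : Adj X) : X := (innHom g)⁻¹ x

@[simp] lemma ract_gen (x y : X) : ract x (gen y) = x ◁ y := by
  simp [ract]

lemma ract_mul (x : X) (g h : Adj X) : ract x (g * h) = ract (ract x g) h := by
  simp [ract, map_mul]

/-- A quandle is connected if the right action of `As(X)` on `X` is transitive. -/
def Connected (X : Type*) [PQuandle X] : Prop :=
  ∀ x y : X, ∃ g : Adj X, ract x g = y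

/-- The homomorphism `ε : As(X) → ℤ` sending every generator `e_x` to `1`. -/
def eps : Adj X →* Multiplicative ℤ :=
  PresentedGroup.toGroup (f := fun _ : X => Multiplicative.ofAdd 1) (by
    rintro r ⟨x, y, rfl⟩
    simp only [map_mul, map_inv, FreeGroup.lift_apply_of]
    group)

@[simp] lemma eps_gen (x : X) : eps (gen x) = Multiplicative.ofAdd 1 :=
  PresentedGroup.toGroup.of _

/-- The underlying set of the universal covering quandle: `Ker ε`. -/
def covOp (a : X) (g h : (eps (X := X)).ker) : (eps (X := X)).ker :=
  ⟨(gen a)⁻¹ * g.1 * (h.1)⁻¹ * gen a * h.1, by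
    have hg : eps g.1 = 1 := g.2
    have hh : eps h.1 = 1 := h.2
    simp only [MonoidHom.mem_ker, map_mul, map_inv, hg, hh]
    group⟩

/-- `n`-fold covering operation. -/
def covOpn (a : X) (g : (eps (X := X)).ker) (n : ℕ) (h : (eps (X := X)).ker) :
    (eps (X := X)).ker := (fun u => covOp a u h)^[n] g

/-- The right translation of the covering quandle as a permutation. -/
def covAct (a : X) (h : (eps (X := X)).ker) : Equiv.Perm (eps (X := X)).ker where
  toFun g := covOp a g h
  invFun g := ⟨gen a * g.1 * (h.1)⁻¹ * (gen a)⁻¹ * h.1, by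
    have hg : eps g.1 = 1 := g.2
    have hh : eps h.1 = 1 := h.2
    simp only [MonoidHom.mem_ker, map_mul, map_inv, hg, hh]
    group⟩
  left_inv g := by
    apply Subtype.ext
    simp only [covOp]
    group
  right_inv g := by
    apply Subtype.ext
    simp only [covOp]
    group

end PQuandle

open PQuandle in
/-- For a finite connected quandle, the type `t_X` divides `|Inn(X)| / |X|`. -/
theorem stmt3 (X : Type*) [PQuandle X] [Finite X]
    (hconn : ∀ x y : X, ∃ f ∈ Inn X, f x = y) (t : ℕ)
    (ht : IsLeast {N : ℕ | 0 < N ∧ ∀ x y : X, opn x N y = x} t) :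
    t ∣ Nat.card (Inn X) / Nat.card X := by
  obtain ⟨⟨htpos, htprop⟩, htle⟩ := ht
  rcases isEmpty_or_nonempty X with h | h
  · have h1 : t ≤ 1 := htle ⟨one_pos, fun x => (h.false x).elim⟩
    have : t = 1 := le_antisymm h1 htpos
    simp [this]
  · set M := Nat.card (Inn X) / Nat.card X with hM
    have hiter : ∀ (N : ℕ) (x y : X), opn x N y = ((act y : Equiv.Perm X) ^ N) x := by
      intro N x y
      rw [opn, Equiv.Perm.coe_pow]
      rfl
    -- orbit-stabilizer: M equals the stabilizer cardinality
    have hMstab : ∀ y : X, M = Nat.card (MulAction.stabilizer (Inn X) y) := by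
      intro y
      have horb : MulAction.orbit (Inn X) y = Set.univ := by
        apply Set.eq_univ_iff_forall.mpr
        intro z
        obtain ⟨f, hf, hfz⟩ := hconn y z
        exact ⟨⟨f, hf⟩, hfz⟩
      have hcard : Nat.card (MulAction.orbit (Inn X) y) = Nat.card X := by
        rw [horb]
        exact Nat.card_congr (Equiv.Set.univ X)
      have hos : Nat.card (MulAction.orbit (Inn X) y) *
          Nat.card (MulAction.stabilizer (Inn X) y) = Nat.card (Inn X) := by
        rw [← Nat.card_prod]
        exact Nat.card_congr (MulAction.orbitProdStabilizerEquivGroup (Inn X) y)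
      rw [hcard] at hos
      have hXpos : 0 < Nat.card X := Nat.card_pos
      rw [hM, ← hos, Nat.mul_div_cancel_left _ hXpos]
    have hkey : ∀ y : X, orderOf (act y : Equiv.Perm X) ∣ M := by
      intro y
      have hmem : (act y : Equiv.Perm X) ∈ Inn X :=
        Subgroup.subset_closure ⟨y, rfl⟩
      set a : Inn X := ⟨act y, hmem⟩ with ha
      have hstab : a ∈ MulAction.stabilizer (Inn X) y := by
        show a • y = y
        show (act y) y = y
        simp [op_self]
      set b : MulAction.stabilizer (Inn X) y := ⟨a, hstab⟩ with hb
      have h1 : orderOf b ∣ Nat.card (MulAction.stabilizer (Inn X) y) :=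
        orderOf_dvd_natCard b
      have h2 : orderOf a = orderOf b :=
        orderOf_injective (MulAction.stabilizer (Inn X) y).subtype
          (Subgroup.subtype_injective _) b
      have h3 : orderOf (act y : Equiv.Perm X) = orderOf a :=
        orderOf_injective (Inn X).subtype (Subgroup.subtype_injective _) a
      rw [h3, h2, hMstab y]
      exact h1
    have hMprop : ∀ x y : X, opn x M y = x := by
      intro x y
      rw [hiter, orderOf_dvd_iff_pow_eq_one.mp (hkey y)]
      rfl
    have hMpos : 0 < M := by
      obtain ⟨y⟩ := h
      rw [hMstab y]
      exact Nat.card_pos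
    have htdvd : ∀ y : X, orderOf (act y : Equiv.Perm X) ∣ t := by
      intro y
      apply orderOf_dvd_iff_pow_eq_one.mpr
      ext x
      rw [← hiter]
      simp [htprop]
    set d := Nat.gcd t M with hd
    have hdpos : 0 < d := Nat.gcd_pos_of_pos_left _ htpos
    have hdprop : ∀ x y : X, opn x d y = x := by
      intro x y
      have : orderOf (act y : Equiv.Perm X) ∣ d :=
        Nat.dvd_gcd (htdvd y) (hkey y)
      rw [hiter, orderOf_dvd_iff_pow_eq_one.mp this]
      rfl
    have htd : t ≤ d := htle ⟨hdpos, hdprop⟩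
    have hdt : d ∣ t := Nat.gcd_dvd_left _ _
    have : d = t := le_antisymm (Nat.le_of_dvd htpos hdt) htd
    rw [← this]
    exact Nat.gcd_dvd_right _ _
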